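/- Let f : ℝⁿ → ℝ be differentiable with L₁-Lipschitz gradient, let x_k ∈ S ⊆ ℝⁿ with S closed, let γ > 0, and let x_{k+1} be a nearest point in S to x_k − γ f'(x_k). Then f(x_{k+1}) ≤ f(x_k) − (1/2)(1/γ − L₁)‖x_{k+1} − x_k‖². -/

import Mathlib

open Metric

local notation "⟪" x ", " y "⟫" => @inner ℝ _ _ x y

lemma descent_lemma {n : ℕ} (f : EuclideanSpace ℝ (Fin n) → ℝ) (L : ℝ)
    (hf : Differentiable ℝ f)
    (hlip : ∀ a b : EuclideanSpace ℝ (Fin n),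
      ‖gradient f a - gradient f b‖ ≤ L * ‖a - b‖)
    (x d : EuclideanSpace ℝ (Fin n)) :
    f (x + d) ≤ f x + ⟪gradient f x, d⟫ + L / 2 * ‖d‖ ^ 2 := by
  set g₀ := gradient f x with hg₀
  have hder : ∀ t : ℝ, HasDerivAt (fun t : ℝ => f (x + t • d))
      ⟪gradient f (x + t • d), d⟫ t := by
    intro t
    have hg : HasDerivAt (fun t : ℝ => x + t • d) d t :=
      by simpa using ((hasDerivAt_id t).smul_const d).const_add x
    have hF := ((hf (x + t • d)).hasGradientAt).hasFDerivAt
    have := hF.comp_hasDerivAt t hg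
    have e : ⟪gradient f (x + t • d), d⟫ = (InnerProductSpace.toDual ℝ _ (gradient f (x + t • d))) d := by
      simp
    rw [e]
    exact this
  set ψ : ℝ → ℝ := fun t => f x + t * ⟪g₀, d⟫ + L * t ^ 2 / 2 * ‖d‖ ^ 2 - f (x + t • d)
    with hψ
  have hψder : ∀ t : ℝ, HasDerivAt ψ
      (⟪g₀, d⟫ + L * t * ‖d‖ ^ 2 - ⟪gradient f (x + t • d), d⟫) t := by
    intro t
    have h1 : HasDerivAt (fun t : ℝ => f x + t * ⟪g₀, d⟫ + L * t ^ 2 / 2 * ‖d‖ ^ 2)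
        (⟪g₀, d⟫ + L * t * ‖d‖ ^ 2) t := by
      have hA : HasDerivAt (fun t : ℝ => t * ⟪g₀, d⟫) ⟪g₀, d⟫ t := by
        simpa using (hasDerivAt_id t).mul_const ⟪g₀, d⟫
      have hB : HasDerivAt (fun t : ℝ => L * t ^ 2 / 2 * ‖d‖ ^ 2)
          (L * t * ‖d‖ ^ 2) t := by
        have : HasDerivAt (fun t : ℝ => t ^ 2) (2 * t) t := by
          simpa using hasDerivAt_pow 2 t
        have := ((this.const_mul L).div_const 2).mul_const (‖d‖ ^ 2)
        rw [show L * t * ‖d‖ ^ 2 = L * (2 * t) / 2 * ‖d‖ ^ 2 by ring]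
        exact this
      exact (hA.const_add (f x)).add hB
    exact h1.sub (hder t)
  have hmono : MonotoneOn ψ (Set.Icc (0:ℝ) 1) := by
    apply monotoneOn_of_deriv_nonneg (convex_Icc 0 1)
    · exact fun t _ => ((hψder t).continuousAt).continuousWithinAt
    · intro t ht
      exact ((hψder t).differentiableAt).differentiableWithinAt
    · intro t ht
      rw [interior_Icc] at ht
      rw [(hψder t).deriv]
      have hcs : ⟪gradient f (x + t • d), d⟫ - ⟪g₀, d⟫ ≤ L * t * ‖d‖ ^ 2 := by
        have h1 : ⟪gradient f (x + t • d) - g₀, d⟫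
            ≤ ‖gradient f (x + t • d) - g₀‖ * ‖d‖ := real_inner_le_norm _ _
        have h2 : ‖gradient f (x + t • d) - g₀‖ ≤ L * ‖t • d‖ := by
          simpa using hlip (x + t • d) x
        have h3 : ‖t • d‖ = t * ‖d‖ := by
          rw [norm_smul, Real.norm_eq_abs, abs_of_pos ht.1]
        calc ⟪gradient f (x + t • d), d⟫ - ⟪g₀, d⟫
            = ⟪gradient f (x + t • d) - g₀, d⟫ := by rw [inner_sub_left]
          _ ≤ ‖gradient f (x + t • d) - g₀‖ * ‖d‖ := h1
          _ ≤ L * ‖t • d‖ * ‖d‖ := by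
              apply mul_le_mul_of_nonneg_right h2 (norm_nonneg d)
          _ = L * t * ‖d‖ ^ 2 := by rw [h3]; ring
      linarith
  have h01 : ψ 0 ≤ ψ 1 := hmono (by simp) (by norm_num) (by norm_num)
  have e0 : ψ 0 = 0 := by
    simp only [hψ, zero_smul, add_zero, zero_mul]
    ring
  have e1 : ψ 1 = f x + ⟪g₀, d⟫ + L / 2 * ‖d‖ ^ 2 - f (x + d) := by
    simp only [hψ, one_smul, one_pow, one_mul, mul_one]
  rw [e0, e1] at h01
  linarith

theorem stmt_3 {n : ℕ} (S : Set (EuclideanSpace ℝ (Fin n))) (hS : IsClosed S)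
    (f : EuclideanSpace ℝ (Fin n) → ℝ) (L₁ γ : ℝ)
    (hf : Differentiable ℝ f)
    (hlip : ∀ a b : EuclideanSpace ℝ (Fin n),
      ‖gradient f a - gradient f b‖ ≤ L₁ * ‖a - b‖)
    (hγ : 0 < γ)
    (x₀ x₁ : EuclideanSpace ℝ (Fin n)) (hx₀ : x₀ ∈ S) (hx₁ : x₁ ∈ S)
    (hproj : ∀ y ∈ S,
      dist x₁ (x₀ - γ • gradient f x₀) ≤ dist y (x₀ - γ • gradient f x₀)) :
    f x₁ ≤ f x₀ - (1 / 2) * (1 / γ - L₁) * ‖x₁ - x₀‖ ^ 2 := by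
  set g := gradient f x₀ with hg
  set d := x₁ - x₀ with hd
  -- projection inequality
  have hpr := hproj x₀ hx₀
  have hd0 : x₀ - (x₀ - γ • g) = γ • g := by abel
  have hd1 : x₁ - (x₀ - γ • g) = d + γ • g := by rw [hd]; abel
  rw [dist_eq_norm, dist_eq_norm, hd0, hd1] at hpr
  have hsq : ‖d + γ • g‖ ^ 2 ≤ ‖γ • g‖ ^ 2 :=
    pow_le_pow_left₀ (norm_nonneg _) hpr 2
  rw [norm_add_sq_real] at hsq
  have hinner : ⟪d, γ • g⟫ = γ * ⟪g, d⟫ := by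
    rw [real_inner_smul_right, real_inner_comm]
  rw [hinner] at hsq
  have hgd : ⟪g, d⟫ ≤ -‖d‖ ^ 2 / (2 * γ) := by
    rw [le_div_iff₀ (show (0:ℝ) < 2 * γ by positivity)]
    nlinarith
  -- descent lemma
  have hdesc := descent_lemma f L₁ hf hlip x₀ d
  have hx : x₀ + d = x₁ := by rw [hd]; abel
  rw [hx, ← hg] at hdesc
  have hγ' : γ ≠ 0 := ne_of_gt hγ
  have h5 : f x₁ ≤ f x₀ + -‖d‖ ^ 2 / (2 * γ) + L₁ / 2 * ‖d‖ ^ 2 :=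
    hdesc.trans (by gcongr)
  have heq : f x₀ - (1 / 2) * (1 / γ - L₁) * ‖d‖ ^ 2
      = f x₀ + -‖d‖ ^ 2 / (2 * γ) + L₁ / 2 * ‖d‖ ^ 2 := by
    field_simp
    ring
  rw [heq]
  exact h5
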